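/- Optimal refinement factor for Milstein-type multilevel Monte Carlo: define g : (1, ∞) → ℝ by g(x) = (x² − 1)(1 + 1/x)/(√x − 1)². Then g attains a global minimum on (1, ∞), and every global minimizer lies in the open interval (4, 5); in particular there exists x* with 4 < x* < 5 such that g(x*) ≤ g(x) for all x > 1. -/
import Mathlib

open MeasureTheory ProbabilityTheory

/-- The heuristic multilevel-cost function `g(x) = (x² − 1)(1 + 1/x)/(√x − 1)²`. -/
noncomputable def mlmcCost (x : ℝ) : ℝ := (x ^ 2 - 1) * (1 + 1 / x) / (Real.sqrt x - 1) ^ 2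

lemma cost_sq (t : ℝ) (ht : 1 < t) :
    mlmcCost (t ^ 2) = (t + 1) * (t ^ 2 + 1) ^ 2 / (t ^ 2 * (t - 1)) := by
  have ht0 : (0 : ℝ) < t := by linarith
  have h1 : Real.sqrt (t ^ 2) = t := Real.sqrt_sq ht0.le
  unfold mlmcCost
  rw [h1]
  have h2 : t ≠ 0 := ne_of_gt ht0
  have h3 : t - 1 ≠ 0 := by intro h; nlinarith
  field_simp
  ring

lemma sqrt_gt_one {x : ℝ} (hx : 1 < x) : 1 < Real.sqrt x := by
  have := Real.sqrt_lt_sqrt (by norm_num) hx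
  simpa using this

lemma cost_ge_left {x : ℝ} (h1 : 1 < x) (h2 : x ≤ 4) : 75 / 4 ≤ mlmcCost x := by
  set t := Real.sqrt x with htdef
  have ht1 : 1 < t := sqrt_gt_one h1
  have hx0 : (0 : ℝ) ≤ x := by linarith
  have hxt : x = t ^ 2 := (Real.sq_sqrt hx0).symm
  have ht2 : t ≤ 2 := by
    rw [show (2:ℝ) = Real.sqrt 4 by rw [show (4:ℝ) = 2^2 by norm_num, Real.sqrt_sq]; norm_num]
    exact Real.sqrt_le_sqrt h2
  rw [hxt, cost_sq t ht1]
  rw [le_div_iff₀ (by nlinarith : (0:ℝ) < t ^ 2 * (t - 1))]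
  nlinarith [mul_nonneg (mul_nonneg (sub_nonneg.2 ht2) (sq_nonneg t)) (sub_nonneg.2 ht1.le),
    sq_nonneg t, sq_nonneg (t - 1), sq_nonneg (t - 2),
    mul_nonneg (sub_nonneg.2 ht2) (sq_nonneg t)]

lemma cost_ge_right {x : ℝ} (h2 : 5 ≤ x) : 75 / 4 ≤ mlmcCost x := by
  set t := Real.sqrt x with htdef
  have ht1 : 1 < t := sqrt_gt_one (by linarith)
  have hx0 : (0 : ℝ) ≤ x := by linarith
  have hxt : x = t ^ 2 := (Real.sq_sqrt hx0).symm
  have ht5 : 5 ≤ t ^ 2 := by rw [← hxt]; exact h2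
  have hta : (559 : ℝ) / 250 ≤ t := by nlinarith
  rw [hxt, cost_sq t ht1]
  rw [le_div_iff₀ (by nlinarith : (0:ℝ) < t ^ 2 * (t - 1))]
  nlinarith [mul_nonneg (sub_nonneg.2 hta) (sq_nonneg t),
    mul_nonneg (mul_nonneg (sub_nonneg.2 hta) (sub_nonneg.2 hta)) (sq_nonneg t),
    mul_nonneg (sub_nonneg.2 hta) (sq_nonneg (t - 2)),
    sq_nonneg (t - 2), sq_nonneg t]

lemma cost_val : mlmcCost (441 / 100) < 75 / 4 := by
  have h : (441 / 100 : ℝ) = (21 / 10) ^ 2 := by norm_num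
  rw [h, cost_sq (21 / 10) (by norm_num)]
  rw [div_lt_iff₀ (by norm_num)]
  norm_num

lemma cost_cont : ContinuousOn mlmcCost (Set.Icc 4 5) := by
  unfold mlmcCost
  apply ContinuousOn.div
  · apply ContinuousOn.mul
    · fun_prop
    · apply ContinuousOn.add continuousOn_const
      apply ContinuousOn.div continuousOn_const continuousOn_id
      intro x hx h
      simp only [Set.mem_Icc] at hx
      simp only [id_eq] at h
      linarith [hx.1]
    -- nothing
  · exact ((Real.continuous_sqrt.sub continuous_const).pow 2).continuousOn
  · intro x hx
    have h4 : (4:ℝ) ≤ x := hx.1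
    have : (2:ℝ) ≤ Real.sqrt x := by
      rw [show (2:ℝ) = Real.sqrt 4 by rw [show (4:ℝ) = 2^2 by norm_num, Real.sqrt_sq]; norm_num]
      exact Real.sqrt_le_sqrt h4
    have h1 : Real.sqrt x - 1 ≠ 0 := by intro h; linarith
    exact pow_ne_zero 2 h1

theorem optimal_refinement_factor :
    (∃ x : ℝ, 1 < x ∧ ∀ y : ℝ, 1 < y → mlmcCost x ≤ mlmcCost y) ∧
    (∀ x : ℝ, 1 < x → (∀ y : ℝ, 1 < y → mlmcCost x ≤ mlmcCost y) → 4 < x ∧ x < 5) ∧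
    (∃ x : ℝ, 4 < x ∧ x < 5 ∧ ∀ y : ℝ, 1 < y → mlmcCost x ≤ mlmcCost y) := by
  -- existence of minimizer on [4,5]
  obtain ⟨x₀, hx₀mem, hx₀min⟩ := IsCompact.exists_isMinOn (isCompact_Icc (a := (4:ℝ)) (b := 5))
    (Set.nonempty_Icc.2 (by norm_num)) cost_cont
  have hmem : (441/100 : ℝ) ∈ Set.Icc (4:ℝ) 5 := by norm_num
  have hx₀val : mlmcCost x₀ < 75 / 4 := lt_of_le_of_lt (hx₀min hmem) cost_val
  have hglobal : ∀ y : ℝ, 1 < y → mlmcCost x₀ ≤ mlmcCost y := by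
    intro y hy
    by_cases hy4 : y ≤ 4
    · exact le_trans hx₀val.le (cost_ge_left hy hy4)
    · by_cases hy5 : 5 ≤ y
      · exact le_trans hx₀val.le (cost_ge_right hy5)
      · exact hx₀min (Set.mem_Icc.2 ⟨by linarith, by linarith⟩)
  have hrange : ∀ x : ℝ, 1 < x → (∀ y : ℝ, 1 < y → mlmcCost x ≤ mlmcCost y) → 4 < x ∧ x < 5 := by
    intro x hx hmin
    have hlt : mlmcCost x < 75 / 4 :=
      lt_of_le_of_lt (hmin (441/100) (by norm_num)) cost_val
    constructor
    · by_contra h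
      push_neg at h
      exact absurd (cost_ge_left hx h) (not_le.2 hlt)
    · by_contra h
      push_neg at h
      exact absurd (cost_ge_right h) (not_le.2 hlt)
  have hx₀1 : 1 < x₀ := by linarith [hx₀mem.1]
  refine ⟨⟨x₀, hx₀1, hglobal⟩, hrange, x₀, ?_, ?_, hglobal⟩
  · exact (hrange x₀ hx₀1 hglobal).1
  · exact (hrange x₀ hx₀1 hglobal).2
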